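/- arXiv:2212.06234 — 5 statements merged into one kernel-verified Lean document; each statement's English description precedes it below -/
import Mathlib

section
/- With $\Omega_B$ and its topology $\mathtt{Top}_{\mathbb{Q}}$ as defined (the compactification of $\mathbb{Z}^2$ with points $\infty_\ast,\infty_\llcorner,\infty_j^{\mathtt{U}},\infty_k^{\mathtt{R}}$ and basis $\mathbb{Q}$), the topological space $(\Omega_B,\mathtt{Top}_{\mathbb{Q}})$ is compact. -/
/-- The magnetic hull `Ω_B`: the compactification of `ℤ²` by the boundary points
`∞_*`, `∞_⌞`, `∞_j^U` (`j ∈ ℤ`) and `∞_k^R` (`k ∈ ℤ`). -/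
inductive OmegaB : Type
  | pt : ℤ × ℤ → OmegaB
  | infAst : OmegaB
  | infCorner : OmegaB
  | infU : ℤ → OmegaB
  | infR : ℤ → OmegaB

namespace OmegaB

/-- `R̄_n = R_n ∪ {∞_{n₂}^R}` where `R_n = {n + j e₁ : j ≥ 0}`. -/
def Rbar (n : ℤ × ℤ) : Set OmegaB :=
  {x | (∃ j : ℤ, 0 ≤ j ∧ x = pt (n.1 + j, n.2)) ∨ x = infR n.2}

/-- `Ū_n = U_n ∪ {∞_{n₁}^U}` where `U_n = {n + j e₂ : j ≥ 0}`. -/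
def Ubar (n : ℤ × ℤ) : Set OmegaB :=
  {x | (∃ j : ℤ, 0 ≤ j ∧ x = pt (n.1, n.2 + j)) ∨ x = infU n.1}

/-- `Q̄_n = Q_n ∪ {∞_⌞} ∪ {∞_j^U : j ≥ n₁} ∪ {∞_j^R : j ≥ n₂}`. -/
def Qbar (n : ℤ × ℤ) : Set OmegaB :=
  {x | (∃ p : ℤ × ℤ, n.1 ≤ p.1 ∧ n.2 ≤ p.2 ∧ x = pt p) ∨ x = infCorner ∨
    (∃ j : ℤ, n.1 ≤ j ∧ x = infU j) ∨ (∃ j : ℤ, n.2 ≤ j ∧ x = infR j)}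

/-- `Q̄_n^c = Q_n^c ∪ {∞_*} ∪ {∞_j^U : j < n₁} ∪ {∞_j^R : j < n₂}`. -/
def Qcbar (n : ℤ × ℤ) : Set OmegaB :=
  {x | (∃ p : ℤ × ℤ, ¬(n.1 ≤ p.1 ∧ n.2 ≤ p.2) ∧ x = pt p) ∨ x = infAst ∨
    (∃ j : ℤ, j < n.1 ∧ x = infU j) ∨ (∃ j : ℤ, j < n.2 ∧ x = infR j)}

/-- The basis collection `ℚ` of subsets of `Ω_B`. -/
def QBasis : Set (Set OmegaB) :=
  {s | (∃ n : ℤ × ℤ, s = {pt n}) ∨ (∃ n : ℤ × ℤ, s = Rbar n) ∨ (∃ n : ℤ × ℤ, s = Ubar n) ∨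
    (∃ n : ℤ × ℤ, s = Qbar n) ∨ (∃ n : ℤ × ℤ, s = Qcbar n)}

end OmegaB

/-- The topology `Top_ℚ` on `Ω_B` generated by the basis `ℚ`. -/
instance : TopologicalSpace OmegaB := TopologicalSpace.generateFrom OmegaB.QBasis

/- ## Auxiliary: the compactified line `Zbar = ℤ ∪ {⊥, ⊤}` with its order topology -/

def Zbar : Type := WithTop (WithBot ℤ)

noncomputable instance : CompleteLinearOrder Zbar :=
  inferInstanceAs (CompleteLinearOrder (WithTop (WithBot ℤ)))
noncomputable instance : TopologicalSpace Zbar := Preorder.topology Zbar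
instance : OrderTopology Zbar := ⟨rfl⟩

def Zbar.of (n : ℤ) : Zbar := ((n : WithBot ℤ) : WithTop (WithBot ℤ))
def Zbar.bot : Zbar := ((⊥ : WithBot ℤ) : WithTop (WithBot ℤ))

lemma Zbar.cases (x : Zbar) : x = ⊤ ∨ x = Zbar.bot ∨ ∃ n, x = Zbar.of n := by
  rcases x with _ | (_ | n)
  · exact Or.inl rfl
  · exact Or.inr (Or.inl rfl)
  · exact Or.inr (Or.inr ⟨n, rfl⟩)

lemma Zbar.of_lt_of {a b : ℤ} : Zbar.of a < Zbar.of b ↔ a < b := by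
  show ((a : WithBot ℤ) : WithTop (WithBot ℤ)) < ((b : WithBot ℤ) : WithTop (WithBot ℤ)) ↔ a < b
  rw [WithTop.coe_lt_coe, WithBot.coe_lt_coe]
lemma Zbar.of_lt_top (a : ℤ) : Zbar.of a < ⊤ := WithTop.coe_lt_top _
lemma Zbar.not_top_lt (a : ℤ) : ¬ ((⊤ : Zbar) < Zbar.of a) := by
  exact _root_.not_top_lt
lemma Zbar.not_top_lt_top : ¬ ((⊤ : Zbar) < ⊤) := lt_irrefl _
lemma Zbar.not_top_lt_bot : ¬ ((⊤ : Zbar) < Zbar.bot) := fun h =>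
  absurd h _root_.not_top_lt
lemma Zbar.not_of_lt_bot (a : ℤ) : ¬ (Zbar.of a < Zbar.bot) := by
  show ¬ ((a : WithBot ℤ) : WithTop (WithBot ℤ)) < ((⊥ : WithBot ℤ) : WithTop (WithBot ℤ))
  rw [WithTop.coe_lt_coe]; simp
lemma Zbar.bot_lt_of (a : ℤ) : Zbar.bot < Zbar.of a := by
  show ((⊥ : WithBot ℤ) : WithTop (WithBot ℤ)) < ((a : WithBot ℤ) : WithTop (WithBot ℤ))
  rw [WithTop.coe_lt_coe]; exact WithBot.bot_lt_coe _
lemma Zbar.not_bot_lt_bot : ¬ (Zbar.bot < Zbar.bot) := lt_irrefl _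
lemma Zbar.bot_lt_top : Zbar.bot < (⊤ : Zbar) := WithTop.coe_lt_top _


lemma exists_shift_right {n a : ℤ} {P : Prop} :
    (∃ j : ℤ, 0 ≤ j ∧ a = n + j ∧ P) ↔ n ≤ a ∧ P :=
  ⟨fun ⟨_, h1, h2, h3⟩ => ⟨by omega, h3⟩, fun ⟨h1, h2⟩ => ⟨a - n, by omega, by omega, h2⟩⟩

lemma exists_shift_up {n b : ℤ} {P : Prop} :
    (∃ j : ℤ, 0 ≤ j ∧ P ∧ b = n + j) ↔ P ∧ n ≤ b :=
  ⟨fun ⟨_, h1, h2, h3⟩ => ⟨h2, by omega⟩, fun ⟨h1, h2⟩ => ⟨b - n, by omega, h1, by omega⟩⟩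

/- ## The projection map -/

def gmap : Zbar × Zbar → OmegaB
  | (some none, _) => .infAst
  | (_, some none) => .infAst
  | (none, none) => .infCorner
  | (none, some (some k)) => .infR k
  | (some (some j), none) => .infU j
  | (some (some j), some (some k)) => .pt (j, k)

@[simp] lemma gmap_of_of (a b : ℤ) : gmap (Zbar.of a, Zbar.of b) = OmegaB.pt (a, b) := rfl
@[simp] lemma gmap_of_top (a : ℤ) : gmap (Zbar.of a, ⊤) = OmegaB.infU a := rfl
@[simp] lemma gmap_of_bot (a : ℤ) : gmap (Zbar.of a, Zbar.bot) = OmegaB.infAst := rfl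
@[simp] lemma gmap_top_of (b : ℤ) : gmap (⊤, Zbar.of b) = OmegaB.infR b := rfl
@[simp] lemma gmap_top_top : gmap ((⊤ : Zbar), (⊤ : Zbar)) = OmegaB.infCorner := rfl
@[simp] lemma gmap_top_bot : gmap ((⊤ : Zbar), Zbar.bot) = OmegaB.infAst := rfl
@[simp] lemma gmap_bot_of (b : ℤ) : gmap (Zbar.bot, Zbar.of b) = OmegaB.infAst := rfl
@[simp] lemma gmap_bot_top : gmap (Zbar.bot, (⊤ : Zbar)) = OmegaB.infAst := rfl
@[simp] lemma gmap_bot_bot : gmap (Zbar.bot, Zbar.bot) = OmegaB.infAst := rfl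

lemma gmap_surjective : Function.Surjective gmap := by
  intro x
  cases x with
  | pt p => exact ⟨(Zbar.of p.1, Zbar.of p.2), rfl⟩
  | infAst => exact ⟨(Zbar.bot, Zbar.bot), rfl⟩
  | infCorner => exact ⟨(⊤, ⊤), rfl⟩
  | infU j => exact ⟨(Zbar.of j, ⊤), rfl⟩
  | infR k => exact ⟨(⊤, Zbar.of k), rfl⟩

lemma pre_pt (n : ℤ × ℤ) :
    gmap ⁻¹' {OmegaB.pt n} =
      (Set.Ioo (Zbar.of (n.1 - 1)) (Zbar.of (n.1 + 1))) ×ˢ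
        (Set.Ioo (Zbar.of (n.2 - 1)) (Zbar.of (n.2 + 1))) := by
  ext ⟨x, y⟩
  obtain rfl | rfl | ⟨a, rfl⟩ := Zbar.cases x <;> obtain rfl | rfl | ⟨b, rfl⟩ := Zbar.cases y <;>
    simp [Zbar.of_lt_of, Zbar.of_lt_top, Zbar.not_top_lt, Zbar.not_top_lt_top,
      Zbar.not_top_lt_bot, Zbar.not_of_lt_bot, Zbar.bot_lt_of, Zbar.not_bot_lt_bot,
      Zbar.bot_lt_top, Prod.ext_iff, exists_shift_right, exists_shift_up] <;> omega

lemma pre_Rbar (n : ℤ × ℤ) :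
    gmap ⁻¹' OmegaB.Rbar n =
      (Set.Ioi (Zbar.of (n.1 - 1))) ×ˢ (Set.Ioo (Zbar.of (n.2 - 1)) (Zbar.of (n.2 + 1))) := by
  ext ⟨x, y⟩
  obtain rfl | rfl | ⟨a, rfl⟩ := Zbar.cases x <;> obtain rfl | rfl | ⟨b, rfl⟩ := Zbar.cases y <;>
    simp [OmegaB.Rbar, Zbar.of_lt_of, Zbar.of_lt_top, Zbar.not_top_lt, Zbar.not_top_lt_top,
      Zbar.not_top_lt_bot, Zbar.not_of_lt_bot, Zbar.bot_lt_of, Zbar.not_bot_lt_bot,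
      Zbar.bot_lt_top, Prod.ext_iff, exists_shift_right, exists_shift_up] <;> omega

lemma pre_Ubar (n : ℤ × ℤ) :
    gmap ⁻¹' OmegaB.Ubar n =
      (Set.Ioo (Zbar.of (n.1 - 1)) (Zbar.of (n.1 + 1))) ×ˢ (Set.Ioi (Zbar.of (n.2 - 1))) := by
  ext ⟨x, y⟩
  obtain rfl | rfl | ⟨a, rfl⟩ := Zbar.cases x <;> obtain rfl | rfl | ⟨b, rfl⟩ := Zbar.cases y <;>
    simp [OmegaB.Ubar, Zbar.of_lt_of, Zbar.of_lt_top, Zbar.not_top_lt, Zbar.not_top_lt_top,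
      Zbar.not_top_lt_bot, Zbar.not_of_lt_bot, Zbar.bot_lt_of, Zbar.not_bot_lt_bot,
      Zbar.bot_lt_top, Prod.ext_iff, exists_shift_right, exists_shift_up] <;> omega

lemma pre_Qbar (n : ℤ × ℤ) :
    gmap ⁻¹' OmegaB.Qbar n =
      (Set.Ioi (Zbar.of (n.1 - 1))) ×ˢ (Set.Ioi (Zbar.of (n.2 - 1))) := by
  ext ⟨x, y⟩
  obtain rfl | rfl | ⟨a, rfl⟩ := Zbar.cases x <;> obtain rfl | rfl | ⟨b, rfl⟩ := Zbar.cases y <;>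
    simp [OmegaB.Qbar, Zbar.of_lt_of, Zbar.of_lt_top, Zbar.not_top_lt, Zbar.not_top_lt_top,
      Zbar.not_top_lt_bot, Zbar.not_of_lt_bot, Zbar.bot_lt_of, Zbar.not_bot_lt_bot,
      Zbar.bot_lt_top, Prod.ext_iff, exists_shift_right, exists_shift_up] <;> omega

lemma pre_Qcbar (n : ℤ × ℤ) :
    gmap ⁻¹' OmegaB.Qcbar n =
      (Set.Iio (Zbar.of n.1)) ×ˢ (Set.univ : Set Zbar) ∪
        (Set.univ : Set Zbar) ×ˢ (Set.Iio (Zbar.of n.2)) := by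
  ext ⟨x, y⟩
  obtain rfl | rfl | ⟨a, rfl⟩ := Zbar.cases x <;> obtain rfl | rfl | ⟨b, rfl⟩ := Zbar.cases y <;>
    simp [OmegaB.Qcbar, Zbar.of_lt_of, Zbar.of_lt_top, Zbar.not_top_lt, Zbar.not_top_lt_top,
      Zbar.not_top_lt_bot, Zbar.not_of_lt_bot, Zbar.bot_lt_of, Zbar.not_bot_lt_bot,
      Zbar.bot_lt_top, Prod.ext_iff, exists_shift_right, exists_shift_up] <;> omega

lemma gmap_continuous : Continuous gmap := by
  rw [show (instTopologicalSpaceOmegaB : TopologicalSpace OmegaB) =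
    TopologicalSpace.generateFrom OmegaB.QBasis from rfl]
  refine continuous_generateFrom_iff.2 ?_
  rintro s (⟨n, rfl⟩ | ⟨n, rfl⟩ | ⟨n, rfl⟩ | ⟨n, rfl⟩ | ⟨n, rfl⟩)
  · rw [pre_pt]; exact (isOpen_Ioo).prod isOpen_Ioo
  · rw [pre_Rbar]; exact (isOpen_Ioi).prod isOpen_Ioo
  · rw [pre_Ubar]; exact (isOpen_Ioo).prod isOpen_Ioi
  · rw [pre_Qbar]; exact (isOpen_Ioi).prod isOpen_Ioi
  · rw [pre_Qcbar]; exact ((isOpen_Iio).prod isOpen_univ).union (isOpen_univ.prod isOpen_Iio)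

/-- `(Ω_B, Top_ℚ)` is compact. -/
theorem OmegaB_compact : CompactSpace OmegaB := by
  constructor
  rw [← gmap_surjective.range_eq]
  exact isCompact_range gmap_continuous
end

section
/- Let $f:\mathbb{Z}^2\to\mathbb{C}$ be a function such that the limits $\lim_{\mathcal{U}_j}f$, $\lim_{\mathcal{R}_j}f$ (for all $j\in\mathbb{Z}$), $\lim_{\mathcal{Q}_\llcorner}f$ and $\lim_{\mathcal{Q}_\ast}f$ along the filters $\mathcal{U}_j$, $\mathcal{R}_j$, $\mathcal{Q}_\llcorner$, $\mathcal{Q}_\ast$ all exist. Then $f$ admits a unique continuous extension $\hat f: \Omega_B \to \mathbb{C}$, defined by $\hat f(\infty_j^{\mathtt{U}})=\lim_{\mathcal{U}_j}f$, $\hat f(\infty_j^{\mathtt{R}})=\lim_{\mathcal{R}_j}f$, $\hat f(\infty_\llcorner)=\lim_{\mathcal{Q}_\llcorner}f$, $\hat f(\infty_\ast)=\lim_{\mathcal{Q}_\ast}f$. -/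
/-- The filter `𝒰_j` on `ℤ²` generated by the up half-line tails `U_{(j,m)}`. -/
def filtU (j : ℤ) : Filter (ℤ × ℤ) :=
  Filter.generate {s | ∃ m : ℤ, s = {p : ℤ × ℤ | p.1 = j ∧ m ≤ p.2}}

/-- The filter `ℛ_j` on `ℤ²` generated by the right half-line tails `R_{(m,j)}`. -/
def filtR (j : ℤ) : Filter (ℤ × ℤ) :=
  Filter.generate {s | ∃ m : ℤ, s = {p : ℤ × ℤ | p.2 = j ∧ m ≤ p.1}}

/-- The filter `𝒬_⌞` on `ℤ²` generated by the quarter-planes `Q_n`. -/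
def filtQcorner : Filter (ℤ × ℤ) :=
  Filter.generate {s | ∃ n : ℤ × ℤ, s = {p : ℤ × ℤ | n.1 ≤ p.1 ∧ n.2 ≤ p.2}}

/-- The filter `𝒬_*` on `ℤ²` generated by the complements `Q_n^c`. -/
def filtQast : Filter (ℤ × ℤ) :=
  Filter.generate {s | ∃ n : ℤ × ℤ, s = {p : ℤ × ℤ | ¬(n.1 ≤ p.1 ∧ n.2 ≤ p.2)}}

open Filter

/- ## auxiliary lemmas -/

lemma mem_filtU' {j : ℤ} {S : Set (ℤ × ℤ)} (h : S ∈ filtU j) :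
    ∃ m : ℤ, ∀ p : ℤ × ℤ, p.1 = j → m ≤ p.2 → p ∈ S := by
  induction h with
  | basic hs => obtain ⟨m, rfl⟩ := hs; exact ⟨m, fun p h1 h2 => ⟨h1, h2⟩⟩
  | univ => exact ⟨0, fun _ _ _ => trivial⟩
  | superset _ hsub ih => obtain ⟨m, hm⟩ := ih; exact ⟨m, fun p h1 h2 => hsub (hm p h1 h2)⟩
  | inter _ _ ih1 ih2 =>
      obtain ⟨m1, h1⟩ := ih1; obtain ⟨m2, h2⟩ := ih2
      exact ⟨max m1 m2, fun p hp hm => ⟨h1 p hp (le_trans (le_max_left _ _) hm),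
        h2 p hp (le_trans (le_max_right _ _) hm)⟩⟩

lemma mem_filtR' {j : ℤ} {S : Set (ℤ × ℤ)} (h : S ∈ filtR j) :
    ∃ m : ℤ, ∀ p : ℤ × ℤ, p.2 = j → m ≤ p.1 → p ∈ S := by
  induction h with
  | basic hs => obtain ⟨m, rfl⟩ := hs; exact ⟨m, fun p h1 h2 => ⟨h1, h2⟩⟩
  | univ => exact ⟨0, fun _ _ _ => trivial⟩
  | superset _ hsub ih => obtain ⟨m, hm⟩ := ih; exact ⟨m, fun p h1 h2 => hsub (hm p h1 h2)⟩
  | inter _ _ ih1 ih2 =>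
      obtain ⟨m1, h1⟩ := ih1; obtain ⟨m2, h2⟩ := ih2
      exact ⟨max m1 m2, fun p hp hm => ⟨h1 p hp (le_trans (le_max_left _ _) hm),
        h2 p hp (le_trans (le_max_right _ _) hm)⟩⟩

lemma mem_filtQcorner' {S : Set (ℤ × ℤ)} (h : S ∈ filtQcorner) :
    ∃ n : ℤ × ℤ, ∀ p : ℤ × ℤ, n.1 ≤ p.1 → n.2 ≤ p.2 → p ∈ S := by
  induction h with
  | basic hs => obtain ⟨n, rfl⟩ := hs; exact ⟨n, fun p h1 h2 => ⟨h1, h2⟩⟩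
  | univ => exact ⟨(0, 0), fun _ _ _ => trivial⟩
  | superset _ hsub ih => obtain ⟨n, hn⟩ := ih; exact ⟨n, fun p h1 h2 => hsub (hn p h1 h2)⟩
  | inter _ _ ih1 ih2 =>
      obtain ⟨n1, h1⟩ := ih1; obtain ⟨n2, h2⟩ := ih2
      exact ⟨(max n1.1 n2.1, max n1.2 n2.2), fun p hp1 hp2 =>
        ⟨h1 p (le_trans (le_max_left _ _) hp1) (le_trans (le_max_left _ _) hp2),
         h2 p (le_trans (le_max_right _ _) hp1) (le_trans (le_max_right _ _) hp2)⟩⟩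

lemma mem_filtQast' {S : Set (ℤ × ℤ)} (h : S ∈ filtQast) :
    ∃ n : ℤ × ℤ, ∀ p : ℤ × ℤ, ¬(n.1 ≤ p.1 ∧ n.2 ≤ p.2) → p ∈ S := by
  induction h with
  | basic hs => obtain ⟨n, rfl⟩ := hs; exact ⟨n, fun p h1 => h1⟩
  | univ => exact ⟨(0, 0), fun _ _ => trivial⟩
  | superset _ hsub ih => obtain ⟨n, hn⟩ := ih; exact ⟨n, fun p h1 => hsub (hn p h1)⟩
  | inter _ _ ih1 ih2 =>
      obtain ⟨n1, h1⟩ := ih1; obtain ⟨n2, h2⟩ := ih2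
      refine ⟨(min n1.1 n2.1, min n1.2 n2.2), fun p hp => ⟨h1 p ?_, h2 p ?_⟩⟩ <;>
        · intro ⟨a, b⟩; exact hp ⟨by simp only []; omega, by simp only []; omega⟩

lemma tail_mem_filtU (j m : ℤ) : {p : ℤ × ℤ | p.1 = j ∧ m ≤ p.2} ∈ filtU j :=
  Filter.mem_generate_of_mem ⟨m, rfl⟩

lemma tail_mem_filtR (j m : ℤ) : {p : ℤ × ℤ | p.2 = j ∧ m ≤ p.1} ∈ filtR j :=
  Filter.mem_generate_of_mem ⟨m, rfl⟩

lemma filtU_neBot (j : ℤ) : (filtU j).NeBot := by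
  refine ⟨fun h => ?_⟩
  obtain ⟨m, hm⟩ := mem_filtU' (S := (∅ : Set (ℤ × ℤ))) (by rw [h]; exact mem_bot)
  exact hm (j, m) rfl le_rfl

lemma filtR_neBot (j : ℤ) : (filtR j).NeBot := by
  refine ⟨fun h => ?_⟩
  obtain ⟨m, hm⟩ := mem_filtR' (S := (∅ : Set (ℤ × ℤ))) (by rw [h]; exact mem_bot)
  exact hm (m, j) rfl le_rfl

lemma filtQcorner_neBot : filtQcorner.NeBot := by
  refine ⟨fun h => ?_⟩
  obtain ⟨n, hn⟩ := mem_filtQcorner' (S := (∅ : Set (ℤ × ℤ))) (by rw [h]; exact mem_bot)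
  exact hn n le_rfl le_rfl

lemma filtQast_neBot : filtQast.NeBot := by
  refine ⟨fun h => ?_⟩
  obtain ⟨n, hn⟩ := mem_filtQast' (S := (∅ : Set (ℤ × ℤ))) (by rw [h]; exact mem_bot)
  exact hn (n.1 - 1, n.2) (by intro ⟨a, _⟩; omega)

lemma isOpen_basis {s : Set OmegaB} (hs : s ∈ OmegaB.QBasis) : IsOpen s :=
  TopologicalSpace.GenerateOpen.basic s hs


open OmegaB Filter in
/-- a function `f : ℤ² → ℂ` whose limits along all the filters `𝒰_j`,
`ℛ_j`, `𝒬_⌞`, `𝒬_*` exist admits a unique continuous extension `f̂ : Ω_B → ℂ`, whose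
boundary values are the corresponding filter limits. -/
theorem unique_continuous_extension (f : ℤ × ℤ → ℂ)
    (hU : ∀ j : ℤ, ∃ y : ℂ, Tendsto f (filtU j) (nhds y))
    (hR : ∀ j : ℤ, ∃ y : ℂ, Tendsto f (filtR j) (nhds y))
    (hQc : ∃ y : ℂ, Tendsto f filtQcorner (nhds y))
    (hQa : ∃ y : ℂ, Tendsto f filtQast (nhds y)) :
    ∃! g : OmegaB → ℂ, Continuous g ∧ (∀ n : ℤ × ℤ, g (pt n) = f n) ∧
      (∀ j : ℤ, Tendsto f (filtU j) (nhds (g (infU j)))) ∧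
      (∀ j : ℤ, Tendsto f (filtR j) (nhds (g (infR j)))) ∧
      Tendsto f filtQcorner (nhds (g infCorner)) ∧
      Tendsto f filtQast (nhds (g infAst)) := by
  choose yU hyU using hU
  choose yR hyR using hR
  obtain ⟨yc, hyc⟩ := hQc
  obtain ⟨ya, hya⟩ := hQa
  set g : OmegaB → ℂ := fun x => match x with
    | pt n => f n
    | infAst => ya
    | infCorner => yc
    | infU j => yU j
    | infR j => yR j with hg
  have key : Continuous g := by
    rw [continuous_iff_continuousAt]
    intro x
    rcases x with n | _ | _ | j | j
    · -- pt n : isolated point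
      intro s hs
      refine mem_nhds_iff.mpr ⟨{pt n}, ?_, isOpen_basis (Or.inl ⟨n, rfl⟩), rfl⟩
      rintro x rfl
      exact Set.mem_preimage.mpr (mem_of_mem_nhds hs)
    · -- infAst
      intro s hs
      obtain ⟨ε, hε, hball⟩ := Metric.mem_nhds_iff.mp hs
      have hCs : Metric.closedBall (g infAst) (ε / 2) ⊆ s :=
        (Metric.closedBall_subset_ball (by linarith)).trans hball
      have hCn : Metric.closedBall (g infAst) (ε / 2) ∈ nhds (g infAst) :=
        Metric.closedBall_mem_nhds _ (by linarith)
      obtain ⟨n, hn⟩ := mem_filtQast' (hya hCn)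
      refine mem_nhds_iff.mpr ⟨Qcbar n, ?_, isOpen_basis (Or.inr (Or.inr (Or.inr (Or.inr ⟨n, rfl⟩)))), Or.inr (Or.inl rfl)⟩
      rintro x (⟨p, hp, rfl⟩ | rfl | ⟨k, hk, rfl⟩ | ⟨k, hk, rfl⟩)
      · exact hCs (hn p hp)
      · exact hCs (Metric.mem_closedBall_self (by linarith))
      · -- infU k with k < n.1
        haveI := filtU_neBot k
        refine hCs (Metric.isClosed_closedBall.mem_of_tendsto (hyU k) ?_)
        refine Filter.mem_of_superset (tail_mem_filtU k 0) ?_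
        rintro p ⟨hp1, _⟩
        exact hn p (by rw [hp1]; intro ⟨a, _⟩; omega)
      · haveI := filtR_neBot k
        refine hCs (Metric.isClosed_closedBall.mem_of_tendsto (hyR k) ?_)
        refine Filter.mem_of_superset (tail_mem_filtR k 0) ?_
        rintro p ⟨hp2, _⟩
        exact hn p (by rw [hp2]; intro ⟨_, b⟩; omega)
    · -- infCorner
      intro s hs
      obtain ⟨ε, hε, hball⟩ := Metric.mem_nhds_iff.mp hs
      have hCs : Metric.closedBall (g infCorner) (ε / 2) ⊆ s :=
        (Metric.closedBall_subset_ball (by linarith)).trans hball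
      have hCn : Metric.closedBall (g infCorner) (ε / 2) ∈ nhds (g infCorner) :=
        Metric.closedBall_mem_nhds _ (by linarith)
      obtain ⟨n, hn⟩ := mem_filtQcorner' (hyc hCn)
      refine mem_nhds_iff.mpr ⟨Qbar n, ?_, isOpen_basis (Or.inr (Or.inr (Or.inr (Or.inl ⟨n, rfl⟩)))), Or.inr (Or.inl rfl)⟩
      rintro x (⟨p, hp1, hp2, rfl⟩ | rfl | ⟨k, hk, rfl⟩ | ⟨k, hk, rfl⟩)
      · exact hCs (hn p hp1 hp2)
      · exact hCs (Metric.mem_closedBall_self (by linarith))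
      · haveI := filtU_neBot k
        refine hCs (Metric.isClosed_closedBall.mem_of_tendsto (hyU k) ?_)
        refine Filter.mem_of_superset (tail_mem_filtU k n.2) ?_
        rintro p ⟨hp1, hp2⟩
        exact hn p (by omega) hp2
      · haveI := filtR_neBot k
        refine hCs (Metric.isClosed_closedBall.mem_of_tendsto (hyR k) ?_)
        refine Filter.mem_of_superset (tail_mem_filtR k n.1) ?_
        rintro p ⟨hp2, hp1⟩
        exact hn p hp1 (by omega)
    · -- infU j
      intro s hs
      obtain ⟨m, hm⟩ := mem_filtU' (hyU j hs)
      refine mem_nhds_iff.mpr ⟨Ubar (j, m), ?_, isOpen_basis (Or.inr (Or.inr (Or.inl ⟨(j, m), rfl⟩))), Or.inr rfl⟩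
      rintro x (⟨k, hk, rfl⟩ | rfl)
      · exact hm (j, m + k) rfl (by omega)
      · exact Set.mem_preimage.mpr (mem_of_mem_nhds hs)
    · -- infR j
      intro s hs
      obtain ⟨m, hm⟩ := mem_filtR' (hyR j hs)
      refine mem_nhds_iff.mpr ⟨Rbar (m, j), ?_, isOpen_basis (Or.inr (Or.inl ⟨(m, j), rfl⟩)), Or.inr rfl⟩
      rintro x (⟨k, hk, rfl⟩ | rfl)
      · exact hm (m + k, j) rfl (by omega)
      · exact Set.mem_preimage.mpr (mem_of_mem_nhds hs)
  refine ⟨g, ⟨key, fun n => rfl, fun j => hyU j, fun j => hyR j, hyc, hya⟩, ?_⟩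
  rintro g' ⟨_, hpt', hU', hR', hc', ha'⟩
  funext x
  rcases x with n | _ | _ | j | j
  · exact hpt' n
  · haveI := filtQast_neBot
    exact tendsto_nhds_unique ha' hya
  · haveI := filtQcorner_neBot
    exact tendsto_nhds_unique hc' hyc
  · haveI := filtU_neBot j
    exact tendsto_nhds_unique (hU' j) (hyU j)
  · haveI := filtR_neBot j
    exact tendsto_nhds_unique (hR' j) (hyR j)
end

section
/- For the quarter-plane magnetic field $B$ with $b_\llcorner-b_\ast\notin 2\pi\mathbb{Z}$ and $f_B(n)=e^{iB(n)}$: for every $\gamma=(\gamma_1,\gamma_2)\in\mathbb{Z}^2$ with $\gamma_1,\gamma_2\geq 0$, the decomposition $\tau_\gamma(f_B) = f_B + (e^{ib_\ast}-e^{ib_\llcorner})\sum_{m=1}^{\gamma_1}\chi_{\mathtt{U}_{(m,\gamma_2+1)}} + (e^{ib_\ast}-e^{ib_\llcorner})\sum_{m=1}^{\gamma_2}\chi_{\mathtt{R}_{(1,m)}}$ holds as functions on $\mathbb{Z}^2$. -/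
/-- The quarter-plane magnetic field: value `bc` on the first open quadrant
`{n₁ ≥ 1, n₂ ≥ 1}`, value `ba` elsewhere. -/
noncomputable def Bqp (bc ba : ℝ) (n : ℤ × ℤ) : ℝ :=
  if 1 ≤ n.1 ∧ 1 ≤ n.2 then bc else ba

/-- The flux function `f_B(n) = exp(i B(n))`. -/
noncomputable def fB (bc ba : ℝ) (n : ℤ × ℤ) : ℂ :=
  Complex.exp (Complex.I * (Bqp bc ba n : ℝ))

/-- Characteristic function of the up half-line `U_p = {p + j e₂ : j ≥ 0}`. -/
def chiU (p : ℤ × ℤ) (n : ℤ × ℤ) : ℂ := if n.1 = p.1 ∧ p.2 ≤ n.2 then 1 else 0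

/-- Characteristic function of the right half-line `R_p = {p + j e₁ : j ≥ 0}`. -/
def chiR (p : ℤ × ℤ) (n : ℤ × ℤ) : ℂ := if p.1 ≤ n.1 ∧ n.2 = p.2 then 1 else 0

/-- the decomposition
`τ_γ(f_B) = f_B + (e^{i b_*} - e^{i b_⌞}) ∑_{m=1}^{γ₁} χ_{U_{(m,γ₂+1)}}
          + (e^{i b_*} - e^{i b_⌞}) ∑_{m=1}^{γ₂} χ_{R_{(1,m)}}` pointwise on `ℤ²`,
for `γ₁, γ₂ ≥ 0`.  Here `(τ_γ g)(n) = g(n - γ)`. -/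
theorem tau_fB_decomposition (bc ba : ℝ) (h : ∀ k : ℤ, bc - ba ≠ 2 * Real.pi * k)
    (γ : ℤ × ℤ) (h1 : 0 ≤ γ.1) (h2 : 0 ≤ γ.2) (n : ℤ × ℤ) :
    fB bc ba (n - γ) =
      fB bc ba n
        + (Complex.exp (Complex.I * (ba : ℝ)) - Complex.exp (Complex.I * (bc : ℝ))) *
            (∑ m ∈ Finset.Icc (1 : ℤ) γ.1, chiU (m, γ.2 + 1) n)
        + (Complex.exp (Complex.I * (ba : ℝ)) - Complex.exp (Complex.I * (bc : ℝ))) *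
            (∑ m ∈ Finset.Icc (1 : ℤ) γ.2, chiR (1, m) n) := by
  have hU : (∑ m ∈ Finset.Icc (1 : ℤ) γ.1, chiU (m, γ.2 + 1) n)
      = if 1 ≤ n.1 ∧ n.1 ≤ γ.1 ∧ γ.2 + 1 ≤ n.2 then 1 else 0 := by
    simp only [chiU]
    by_cases hp : γ.2 + 1 ≤ n.2
    · simp only [hp, and_true]
      rw [Finset.sum_ite_eq]
      simp [Finset.mem_Icc, and_assoc]
    · simp [hp]
  have hR : (∑ m ∈ Finset.Icc (1 : ℤ) γ.2, chiR (1, m) n)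
      = if 1 ≤ n.1 ∧ 1 ≤ n.2 ∧ n.2 ≤ γ.2 then 1 else 0 := by
    simp only [chiR]
    by_cases hp : (1 : ℤ) ≤ n.1
    · simp only [hp, true_and]
      rw [Finset.sum_ite_eq]
      simp [Finset.mem_Icc, and_assoc]
    · simp [hp]
  rw [hU, hR]
  obtain ⟨n1, n2⟩ := n
  obtain ⟨g1, g2⟩ := γ
  simp only [fB, Bqp, Prod.fst_sub, Prod.snd_sub, sub_le_iff_le_add]
  split_ifs <;> first | ring1 | (exfalso; omega)
end

section
/- Let $\mathfrak{r}_0$, $\mathfrak{u}_0$ be the multiplication operators on $\ell^2(\mathbb{Z}^2)$ by the characteristic functions of $\mathtt{R}_0=\{(j,0):j\geq 0\}$ and $\mathtt{U}_0=\{(0,j):j\geq 0\}$, and let $\mathfrak{s}_1,\mathfrak{s}_2$ be magnetic translations. Then the operator $\mathfrak{w}:=(\mathfrak{s}_1-\mathbf{1})\mathfrak{r}_0 + (\mathfrak{s}_2^*-\mathbf{1})\mathfrak{u}_0(\mathbf{1}-\mathfrak{r}_0)+\mathbf{1}$ is unitary. -/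
noncomputable section

/-- The Hilbert space `ℓ²(ℤ²)`. -/
abbrev H2 := lp (fun _ : ℤ × ℤ => ℂ) 2

/-- The permutation of `ℤ²` induced by the interface translation. -/
def wsig (n : ℤ × ℤ) : ℤ × ℤ :=
  if 0 ≤ n.1 ∧ n.2 = 0 then (n.1 + 1, n.2)
  else if n.1 = 0 ∧ 1 ≤ n.2 then (n.1, n.2 - 1) else n

/-- The inverse permutation. -/
def wtau (m : ℤ × ℤ) : ℤ × ℤ :=
  if 1 ≤ m.1 ∧ m.2 = 0 then (m.1 - 1, m.2)
  else if m.1 = 0 ∧ 0 ≤ m.2 then (m.1, m.2 + 1) else m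

lemma wtau_wsig (n : ℤ × ℤ) : wtau (wsig n) = n := by
  obtain ⟨a, b⟩ := n
  by_cases h1 : 0 ≤ a ∧ b = 0
  · rw [wsig, if_pos h1]
    rw [wtau, if_pos (by simp; omega)]
    simp
  · by_cases h2 : a = 0 ∧ 1 ≤ b
    · rw [wsig, if_neg h1, if_pos h2]
      rw [wtau, if_neg (by simp; omega), if_pos (by simp; omega)]
      simp
    · rw [wsig, if_neg h1, if_neg h2]
      rw [wtau, if_neg (by simp at *; omega), if_neg (by simp at *; omega)]

lemma wsig_wtau (m : ℤ × ℤ) : wsig (wtau m) = m := by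
  obtain ⟨a, b⟩ := m
  by_cases h1 : 1 ≤ a ∧ b = 0
  · rw [wtau, if_pos h1]
    rw [wsig, if_pos (by simp; omega)]
    simp
  · by_cases h2 : a = 0 ∧ 0 ≤ b
    · rw [wtau, if_neg h1, if_pos h2]
      rw [wsig, if_neg (by simp at *; omega), if_pos (by simp; omega)]
      simp
    · rw [wtau, if_neg h1, if_neg h2]
      rw [wsig, if_neg (by simp at *; omega), if_neg (by simp at *; omega)]

/-- The phase attached to each site by the interface translation. -/
def wc (A : ℤ × ℤ → ℤ × ℤ → ℝ) (n : ℤ × ℤ) : ℂ :=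
  if 0 ≤ n.1 ∧ n.2 = 0 then Complex.exp (Complex.I * (A (n.1 + 1, n.2) n : ℝ))
  else if n.1 = 0 ∧ 1 ≤ n.2 then
    (starRingEnd ℂ) (Complex.exp (Complex.I * (A n (n.1, n.2 - 1) : ℝ)))
  else 1

lemma conj_exp_I_mul (r : ℝ) :
    (starRingEnd ℂ) (Complex.exp (Complex.I * r)) * Complex.exp (Complex.I * r) = 1 := by
  rw [← Complex.exp_conj, ← Complex.exp_add, map_mul, Complex.conj_I, Complex.conj_ofReal,
    neg_mul, neg_add_cancel, Complex.exp_zero]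

lemma wc_unimodular (A : ℤ × ℤ → ℤ × ℤ → ℝ) (n : ℤ × ℤ) :
    (starRingEnd ℂ) (wc A n) * wc A n = 1 := by
  rw [wc]
  split_ifs
  · exact conj_exp_I_mul _
  · rw [Complex.conj_conj, mul_comm]
    exact conj_exp_I_mul _
  · simp

set_option maxHeartbeats 2000000 in
open ContinuousLinearMap in
/-- the operator `𝔴 = (𝔰₁ - 𝟏) 𝔯₀ + (𝔰₂* - 𝟏) 𝔲₀ (𝟏 - 𝔯₀) + 𝟏` is
unitary, where `𝔯₀`, `𝔲₀` are the multiplication operators by the characteristic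
functions of `R₀ = {(j,0) : j ≥ 0}` and `U₀ = {(0,j) : j ≥ 0}`, and `𝔰₁`, `𝔰₂` are
magnetic translations. -/
theorem w_unitary (A : ℤ × ℤ → ℤ × ℤ → ℝ) (S1 S2 R0 U0 : H2 →L[ℂ] H2)
    (hS1 : ∀ (ψ : H2) (n : ℤ × ℤ),
      S1 ψ n = Complex.exp (Complex.I * (A n (n - (1, 0)) : ℝ)) * ψ (n - (1, 0)))
    (hS2 : ∀ (ψ : H2) (n : ℤ × ℤ),
      S2 ψ n = Complex.exp (Complex.I * (A n (n - (0, 1)) : ℝ)) * ψ (n - (0, 1)))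
    (hR0 : ∀ (ψ : H2) (n : ℤ × ℤ), R0 ψ n = if 0 ≤ n.1 ∧ n.2 = 0 then ψ n else 0)
    (hU0 : ∀ (ψ : H2) (n : ℤ × ℤ), U0 ψ n = if n.1 = 0 ∧ 0 ≤ n.2 then ψ n else 0) :
    adjoint ((S1 - 1) * R0 + (adjoint S2 - 1) * U0 * (1 - R0) + 1) *
        ((S1 - 1) * R0 + (adjoint S2 - 1) * U0 * (1 - R0) + 1) = 1 ∧
      ((S1 - 1) * R0 + (adjoint S2 - 1) * U0 * (1 - R0) + 1) *
        adjoint ((S1 - 1) * R0 + (adjoint S2 - 1) * U0 * (1 - R0) + 1) = 1 := by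
  have heval : ∀ (f : H2) (n : ℤ × ℤ), (inner ℂ (lp.single 2 n (1 : ℂ)) f : ℂ) = f n := by
    intro f n
    rw [lp.inner_single_left]
    simp [RCLike.inner_apply]
  -- pointwise formula for the adjoint of S2
  have hS2a : ∀ (ψ : H2) (n : ℤ × ℤ), adjoint S2 ψ n
      = (starRingEnd ℂ) (Complex.exp (Complex.I * (A (n + (0, 1)) n : ℝ))) * ψ (n + (0, 1)) := by
    intro ψ n
    have hsingle : S2 (lp.single 2 n (1 : ℂ))
        = Complex.exp (Complex.I * (A (n + (0, 1)) n : ℝ)) • lp.single 2 (n + (0, 1)) (1 : ℂ) := by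
      apply lp.ext
      funext m
      rw [lp.coeFn_smul, Pi.smul_apply]
      rw [show (S2 (lp.single 2 n (1:ℂ)) : ∀ _ : ℤ × ℤ, ℂ) m = S2 (lp.single 2 n (1:ℂ)) m from rfl,
        hS2]
      by_cases hm : m = n + (0, 1)
      · subst hm
        rw [add_sub_cancel_right, lp.single_apply_self, lp.single_apply_self]
        simp
      · rw [lp.single_apply_ne _ _ _ hm,
          lp.single_apply_ne _ _ _ (fun h => hm (by rw [← h]; ring))]
        simp
    rw [← heval, adjoint_inner_right, hsingle, inner_smul_left, heval]
  set W := (S1 - 1) * R0 + (adjoint S2 - 1) * U0 * (1 - R0) + 1 with hWdef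
  -- projection onto U₀ \ R₀
  have hU0' : ∀ (ψ : H2) (k : ℤ × ℤ),
      U0 ((1 - R0) ψ) k = if k.1 = 0 ∧ 1 ≤ k.2 then ψ k else 0 := by
    intro ψ k
    rw [hU0]
    have : ((1 - R0) ψ : ∀ _ : ℤ × ℤ, ℂ) k = ψ k - R0 ψ k := by
      rw [ContinuousLinearMap.sub_apply, ContinuousLinearMap.one_apply, lp.coeFn_sub,
        Pi.sub_apply]
    rw [this, hR0]
    obtain ⟨a, b⟩ := k
    dsimp only
    split_ifs <;> first | omega | ring
  -- pointwise formula for W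
  have hW : ∀ (ψ : H2) (m : ℤ × ℤ), W ψ m = wc A (wtau m) * ψ (wtau m) := by
    intro ψ m
    have expand : W ψ m = S1 (R0 ψ) m - R0 ψ m
        + (adjoint S2 (U0 ((1 - R0) ψ)) m - U0 ((1 - R0) ψ) m) + ψ m := by
      rw [hWdef]
      rw [ContinuousLinearMap.add_apply, ContinuousLinearMap.add_apply,
        ContinuousLinearMap.mul_apply, ContinuousLinearMap.mul_apply,
        ContinuousLinearMap.mul_apply, ContinuousLinearMap.sub_apply,
        ContinuousLinearMap.sub_apply, ContinuousLinearMap.one_apply,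
        ContinuousLinearMap.one_apply, ContinuousLinearMap.one_apply]
      rw [lp.coeFn_add, Pi.add_apply, lp.coeFn_add, Pi.add_apply, lp.coeFn_sub, Pi.sub_apply,
        lp.coeFn_sub, Pi.sub_apply]
    rw [expand, hS1, hR0, hR0, hS2a, hU0', hU0']
    obtain ⟨a, b⟩ := m
    have e1 : ((a, b) : ℤ × ℤ) - (1, 0) = (a - 1, b) := by rw [Prod.mk_sub_mk, sub_zero]
    have e2 : ((a, b) : ℤ × ℤ) + (0, 1) = (a, b + 1) := by rw [Prod.mk_add_mk, add_zero]
    rw [e1, e2]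
    simp only [wtau]
    try dsimp only
    split_ifs <;>
      (simp only [wc]; try dsimp only
       split_ifs) <;>
        first
          | omega
          | ring
          | ((try rw [show a - 1 + 1 = a from by omega]);
             (try rw [show b + 1 - 1 = b from by omega]);
             first | ring | omega)
  -- action of W on basis vectors
  have hWsingle : ∀ n : ℤ × ℤ,
      W (lp.single 2 n (1 : ℂ)) = wc A n • lp.single 2 (wsig n) (1 : ℂ) := by
    intro n
    apply lp.ext
    funext m
    rw [lp.coeFn_smul, Pi.smul_apply]
    rw [show (W (lp.single 2 n (1:ℂ)) : ∀ _ : ℤ × ℤ, ℂ) m = W (lp.single 2 n (1:ℂ)) m from rfl,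
      hW]
    by_cases hm : m = wsig n
    · subst hm
      rw [wtau_wsig, lp.single_apply_self, lp.single_apply_self]
      simp
    · have hne : wtau m ≠ n := fun h => hm (by rw [← wsig_wtau m, h])
      rw [lp.single_apply_ne _ _ _ hne, lp.single_apply_ne _ _ _ hm]
      simp
  -- pointwise formula for the adjoint of W
  have hWa : ∀ (ψ : H2) (n : ℤ × ℤ),
      adjoint W ψ n = (starRingEnd ℂ) (wc A n) * ψ (wsig n) := by
    intro ψ n
    rw [← heval, adjoint_inner_right, hWsingle, inner_smul_left, heval]
  constructor
  · ext ψ n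
    rw [ContinuousLinearMap.mul_apply, ContinuousLinearMap.one_apply, hWa, hW,
      wtau_wsig, ← mul_assoc, wc_unimodular, one_mul]
  · ext ψ m
    rw [ContinuousLinearMap.mul_apply, ContinuousLinearMap.one_apply, hW, hWa,
      wsig_wtau, ← mul_assoc, mul_comm (wc A (wtau m)), wc_unimodular, one_mul]
end
end

section
/- The dynamical system $(\Omega_B,\tau^*,\mathbb{Z}^2)$ has exactly two ergodic $\tau^*$-invariant Borel probability measures, namely the Dirac measures $\delta_{\infty_\llcorner}$ and $\delta_{\infty_\ast}$. -/
/-- The Borel σ-algebra on `Ω_B`. -/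
instance : MeasurableSpace OmegaB := borel OmegaB

/-- The `ℤ²`-action `τ*` on `Ω_B`. -/
def tauAct (γ : ℤ × ℤ) : OmegaB → OmegaB
  | OmegaB.pt n => OmegaB.pt (n + γ)
  | OmegaB.infAst => OmegaB.infAst
  | OmegaB.infCorner => OmegaB.infCorner
  | OmegaB.infU j => OmegaB.infU (j + γ.1)
  | OmegaB.infR k => OmegaB.infR (k + γ.2)


namespace OmegaB

lemma isOpen_basis {s : Set OmegaB} (hs : s ∈ QBasis) : IsOpen s :=
  TopologicalSpace.GenerateOpen.basic s hs

instance : BorelSpace OmegaB := ⟨rfl⟩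

lemma singleton_infU_eq (j : ℤ) : ({infU j} : Set OmegaB) = ⋂ m : ℤ, Ubar (j, m) := by
  ext x
  simp only [Set.mem_singleton_iff, Set.mem_iInter, Ubar, Set.mem_setOf_eq]
  cases x with
  | pt p =>
      refine iff_of_false (by simp) fun h => ?_
      rcases h (p.2 + 1) with ⟨j', hj', he⟩ | he
      · rw [pt.injEq, Prod.ext_iff] at he
        simp only at he
        omega
      · exact absurd he (by simp)
  | infU k => simp
  | infR k => simp
  | infAst => simp
  | infCorner => simp

lemma singleton_infR_eq (k : ℤ) : ({infR k} : Set OmegaB) = ⋂ m : ℤ, Rbar (m, k) := by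
  ext x
  simp only [Set.mem_singleton_iff, Set.mem_iInter, Rbar, Set.mem_setOf_eq]
  cases x with
  | pt p =>
      refine iff_of_false (by simp) fun h => ?_
      rcases h (p.1 + 1) with ⟨j', hj', he⟩ | he
      · rw [pt.injEq, Prod.ext_iff] at he
        simp only at he
        omega
      · exact absurd he (by simp)
  | infU j => simp
  | infR j => simp
  | infAst => simp
  | infCorner => simp

lemma singleton_infCorner_eq : ({infCorner} : Set OmegaB) = ⋂ n : ℤ × ℤ, Qbar n := by
  ext x
  simp only [Set.mem_singleton_iff, Set.mem_iInter, Qbar, Set.mem_setOf_eq]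
  cases x with
  | pt p =>
      refine iff_of_false (by simp) fun h => ?_
      rcases h (p.1 + 1, p.2) with ⟨q, h1, h2, he⟩ | he | ⟨j', _, he⟩ | ⟨j', _, he⟩
      · rw [pt.injEq] at he
        subst he
        have h1' : p.1 + 1 ≤ p.1 := h1
        omega
      · exact absurd he (by simp)
      · exact absurd he (by simp)
      · exact absurd he (by simp)
  | infU j =>
      refine iff_of_false (by simp) fun h => ?_
      rcases h (j + 1, 0) with ⟨q, _, _, he⟩ | he | ⟨j', hj', he⟩ | ⟨j', _, he⟩
      · exact absurd he (by simp)
      · exact absurd he (by simp)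
      · rw [infU.injEq] at he
        subst he
        have h1' : j + 1 ≤ j := hj'
        omega
      · exact absurd he (by simp)
  | infR j =>
      refine iff_of_false (by simp) fun h => ?_
      rcases h (0, j + 1) with ⟨q, _, _, he⟩ | he | ⟨j', _, he⟩ | ⟨j', hj', he⟩
      · exact absurd he (by simp)
      · exact absurd he (by simp)
      · exact absurd he (by simp)
      · rw [infR.injEq] at he
        subst he
        have h1' : j + 1 ≤ j := hj'
        omega
  | infAst =>
      refine iff_of_false (by simp) fun h => ?_
      rcases h (0, 0) with ⟨q, _, _, he⟩ | he | ⟨j', _, he⟩ | ⟨j', _, he⟩ <;>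
        exact absurd he (by simp)
  | infCorner =>
      exact iff_of_true rfl fun n => Or.inr (Or.inl rfl)

lemma singleton_infAst_eq : ({infAst} : Set OmegaB) = ⋂ n : ℤ × ℤ, Qcbar n := by
  ext x
  simp only [Set.mem_singleton_iff, Set.mem_iInter, Qcbar, Set.mem_setOf_eq]
  cases x with
  | pt p =>
      refine iff_of_false (by simp) fun h => ?_
      rcases h p with ⟨q, hq, he⟩ | he | ⟨j', _, he⟩ | ⟨j', _, he⟩
      · rw [pt.injEq] at he
        subst he
        exact hq ⟨le_refl _, le_refl _⟩
      · exact absurd he (by simp)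
      · exact absurd he (by simp)
      · exact absurd he (by simp)
  | infU j =>
      refine iff_of_false (by simp) fun h => ?_
      rcases h (j, 0) with ⟨q, _, he⟩ | he | ⟨j', hj', he⟩ | ⟨j', _, he⟩
      · exact absurd he (by simp)
      · exact absurd he (by simp)
      · rw [infU.injEq] at he
        subst he
        have h1' : j < j := hj'
        omega
      · exact absurd he (by simp)
  | infR j =>
      refine iff_of_false (by simp) fun h => ?_
      rcases h (0, j) with ⟨q, _, he⟩ | he | ⟨j', _, he⟩ | ⟨j', hj', he⟩
      · exact absurd he (by simp)
      · exact absurd he (by simp)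
      · exact absurd he (by simp)
      · rw [infR.injEq] at he
        subst he
        have h1' : j < j := hj'
        omega
  | infAst =>
      exact iff_of_true rfl fun n => Or.inr (Or.inl rfl)
  | infCorner =>
      refine iff_of_false (by simp) fun h => ?_
      rcases h (0, 0) with ⟨q, _, he⟩ | he | ⟨j', _, he⟩ | ⟨j', _, he⟩ <;>
        exact absurd he (by simp)

instance : MeasurableSingletonClass OmegaB := by
  constructor
  intro a
  cases a with
  | pt n => exact (isOpen_basis (Or.inl ⟨n, rfl⟩)).measurableSet
  | infU j =>
      rw [singleton_infU_eq]
      exact MeasurableSet.iInter fun m =>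
        (isOpen_basis (Or.inr (Or.inr (Or.inl ⟨(j, m), rfl⟩)))).measurableSet
  | infR k =>
      rw [singleton_infR_eq]
      exact MeasurableSet.iInter fun m =>
        (isOpen_basis (Or.inr (Or.inl ⟨(m, k), rfl⟩))).measurableSet
  | infCorner =>
      rw [singleton_infCorner_eq]
      exact MeasurableSet.iInter fun n =>
        (isOpen_basis (Or.inr (Or.inr (Or.inr (Or.inl ⟨n, rfl⟩))))).measurableSet
  | infAst =>
      rw [singleton_infAst_eq]
      exact MeasurableSet.iInter fun n =>
        (isOpen_basis (Or.inr (Or.inr (Or.inr (Or.inr ⟨n, rfl⟩))))).measurableSet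

end OmegaB

open OmegaB in
lemma tau_preimage_pt (γ n : ℤ × ℤ) : tauAct γ ⁻¹' {pt n} = {pt (n - γ)} := by
  ext x
  cases x <;>
    simp [tauAct, Prod.ext_iff] <;> omega

open OmegaB in
lemma tau_preimage_Rbar (γ n : ℤ × ℤ) : tauAct γ ⁻¹' Rbar n = Rbar (n - γ) := by
  ext x
  cases x with
  | pt p =>
      simp only [Set.mem_preimage, Rbar, tauAct, Set.mem_setOf_eq, reduceCtorEq, or_false,
        pt.injEq, Prod.ext_iff, Prod.fst_add, Prod.snd_add, Prod.fst_sub, Prod.snd_sub]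
      constructor
      · rintro ⟨j, h1, h2, h3⟩; exact ⟨j, h1, by omega, by omega⟩
      · rintro ⟨j, h1, h2, h3⟩; exact ⟨j, h1, by omega, by omega⟩
  | infR k =>
      simp [Rbar, tauAct, Prod.ext_iff]; omega
  | infU k => simp [Rbar, tauAct]
  | infAst => simp [Rbar, tauAct]
  | infCorner => simp [Rbar, tauAct]

open OmegaB in
lemma tau_preimage_Ubar (γ n : ℤ × ℤ) : tauAct γ ⁻¹' Ubar n = Ubar (n - γ) := by
  ext x
  cases x with
  | pt p =>
      simp only [Set.mem_preimage, Ubar, tauAct, Set.mem_setOf_eq, reduceCtorEq, or_false,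
        pt.injEq, Prod.ext_iff, Prod.fst_add, Prod.snd_add, Prod.fst_sub, Prod.snd_sub]
      constructor
      · rintro ⟨j, h1, h2, h3⟩; exact ⟨j, h1, by omega, by omega⟩
      · rintro ⟨j, h1, h2, h3⟩; exact ⟨j, h1, by omega, by omega⟩
  | infU k =>
      simp [Ubar, tauAct, Prod.ext_iff]; omega
  | infR k => simp [Ubar, tauAct]
  | infAst => simp [Ubar, tauAct]
  | infCorner => simp [Ubar, tauAct]

open OmegaB in
lemma tau_preimage_Qbar (γ n : ℤ × ℤ) : tauAct γ ⁻¹' Qbar n = Qbar (n - γ) := by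
  ext x
  cases x with
  | pt p =>
      simp only [Set.mem_preimage, Qbar, tauAct, Set.mem_setOf_eq, reduceCtorEq, or_false,
        false_or, pt.injEq, Prod.ext_iff, Prod.fst_add, Prod.snd_add, Prod.fst_sub, Prod.snd_sub,
        and_false, exists_false, exists_const]
      constructor
      · rintro ⟨q, h1, h2, h3, h4⟩
        exact ⟨p, by omega, by omega, rfl, rfl⟩
      · rintro ⟨q, h1, h2, h3, h4⟩
        refine ⟨(p.1 + γ.1, p.2 + γ.2), ?_, ?_, rfl, rfl⟩
        · show n.1 ≤ p.1 + γ.1; omega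
        · show n.2 ≤ p.2 + γ.2; omega
  | infU k =>
      simp [Qbar, tauAct]
  | infR k =>
      simp [Qbar, tauAct]
  | infAst => simp [Qbar, tauAct]
  | infCorner => simp [Qbar, tauAct]

open OmegaB in
lemma tau_preimage_Qcbar (γ n : ℤ × ℤ) : tauAct γ ⁻¹' Qcbar n = Qcbar (n - γ) := by
  ext x
  cases x with
  | pt p =>
      simp only [Set.mem_preimage, Qcbar, tauAct, Set.mem_setOf_eq, reduceCtorEq, or_false,
        false_or, pt.injEq, Prod.ext_iff, Prod.fst_add, Prod.snd_add, Prod.fst_sub, Prod.snd_sub,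
        and_false, exists_false, exists_const]
      constructor
      · rintro ⟨q, h1, h2, h3⟩
        exact ⟨p, by omega, rfl, rfl⟩
      · rintro ⟨q, h1, h2, h3⟩
        refine ⟨(p.1 + γ.1, p.2 + γ.2), ?_, rfl, rfl⟩
        show ¬(n.1 ≤ p.1 + γ.1 ∧ n.2 ≤ p.2 + γ.2)
        omega
  | infU k =>
      simp only [Set.mem_preimage, Qcbar, tauAct, Set.mem_setOf_eq, reduceCtorEq, and_false,
        exists_false, or_false, false_or, infU.injEq, exists_eq_right, Prod.fst_sub]
      constructor
      · rintro ⟨j, h1, h2⟩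
        exact ⟨k, by omega, rfl⟩
      · rintro ⟨j, h1, h2⟩
        exact ⟨k + γ.1, by omega, rfl⟩
  | infR k =>
      simp only [Set.mem_preimage, Qcbar, tauAct, Set.mem_setOf_eq, reduceCtorEq, and_false,
        exists_false, or_false, false_or, infR.injEq, exists_eq_right, Prod.snd_sub]
      constructor
      · rintro ⟨j, h1, h2⟩
        exact ⟨k, by omega, rfl⟩
      · rintro ⟨j, h1, h2⟩
        exact ⟨k + γ.2, by omega, rfl⟩
  | infAst => simp [Qcbar, tauAct]
  | infCorner => simp [Qcbar, tauAct]

lemma tau_continuous (γ : ℤ × ℤ) : Continuous (tauAct γ) := by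
  rw [show (instTopologicalSpaceOmegaB : TopologicalSpace OmegaB) =
    TopologicalSpace.generateFrom OmegaB.QBasis from rfl, continuous_generateFrom_iff]
  rintro s (⟨n, rfl⟩ | ⟨n, rfl⟩ | ⟨n, rfl⟩ | ⟨n, rfl⟩ | ⟨n, rfl⟩)
  · rw [tau_preimage_pt]; exact OmegaB.isOpen_basis (Or.inl ⟨n - γ, rfl⟩)
  · rw [tau_preimage_Rbar]; exact OmegaB.isOpen_basis (Or.inr (Or.inl ⟨n - γ, rfl⟩))
  · rw [tau_preimage_Ubar]; exact OmegaB.isOpen_basis (Or.inr (Or.inr (Or.inl ⟨n - γ, rfl⟩)))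
  · rw [tau_preimage_Qbar];
    exact OmegaB.isOpen_basis (Or.inr (Or.inr (Or.inr (Or.inl ⟨n - γ, rfl⟩))))
  · rw [tau_preimage_Qcbar];
    exact OmegaB.isOpen_basis (Or.inr (Or.inr (Or.inr (Or.inr ⟨n - γ, rfl⟩))))

lemma tau_measurable (γ : ℤ × ℤ) : Measurable (tauAct γ) :=
  (tau_continuous γ).measurable


open OmegaB in
lemma tau_preimage_infU (γ : ℤ × ℤ) (j : ℤ) :
    tauAct γ ⁻¹' ({infU j} : Set OmegaB) = {infU (j - γ.1)} := by
  ext x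
  cases x <;> simp [tauAct] <;> omega

open OmegaB in
lemma tau_preimage_infR (γ : ℤ × ℤ) (k : ℤ) :
    tauAct γ ⁻¹' ({infR k} : Set OmegaB) = {infR (k - γ.2)} := by
  ext x
  cases x <;> simp [tauAct] <;> omega

open MeasureTheory in
lemma eq_dirac_of {μ : Measure OmegaB} (hp : IsProbabilityMeasure μ) {a : OmegaB}
    (h : μ {a} = 1) : μ = Measure.dirac a := by
  ext s hs
  rw [Measure.dirac_apply' a hs]
  by_cases ha : a ∈ s
  · rw [Set.indicator_of_mem ha]
    refine le_antisymm prob_le_one ?_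
    calc (1 : ENNReal) = μ {a} := h.symm
      _ ≤ μ s := measure_mono (Set.singleton_subset_iff.mpr ha)
  · rw [Set.indicator_of_notMem ha]
    have hc : μ ({a}ᶜ) = 0 := by
      rw [measure_compl (measurableSet_singleton a) (measure_ne_top μ _), h, measure_univ,
        tsub_self]
    exact le_antisymm (le_of_le_of_eq
      (measure_mono (Set.subset_compl_singleton_iff.mpr ha)) hc) zero_le

open MeasureTheory in
/-- the ergodic `τ*`-invariant Borel probability measures on `Ω_B` are
exactly the two Dirac measures `δ_{∞_⌞}` and `δ_{∞_*}`. -/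
theorem ergodic_measures_OmegaB (μ : Measure OmegaB) (hp : IsProbabilityMeasure μ) :
    ((∀ γ : ℤ × ℤ, Measure.map (tauAct γ) μ = μ) ∧
      (∀ s : Set OmegaB, MeasurableSet s → (∀ γ : ℤ × ℤ, tauAct γ ⁻¹' s = s) →
        μ s = 0 ∨ μ s = 1)) ↔
      (μ = Measure.dirac OmegaB.infCorner ∨ μ = Measure.dirac OmegaB.infAst) := by
  constructor
  · rintro ⟨h1, h2⟩
    have hinv : ∀ (γ : ℤ × ℤ) (s : Set OmegaB), MeasurableSet s →
        μ (tauAct γ ⁻¹' s) = μ s := by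
      intro γ s hs
      conv_rhs => rw [← h1 γ]
      rw [Measure.map_apply (tau_measurable γ) hs]
    have hpt : ∀ n : ℤ × ℤ, μ {OmegaB.pt n} = μ {OmegaB.pt 0} := by
      intro n
      have := hinv n {OmegaB.pt n} (measurableSet_singleton _)
      rw [tau_preimage_pt, sub_self] at this
      exact this.symm
    have hU : ∀ j : ℤ, μ {OmegaB.infU j} = μ {OmegaB.infU 0} := by
      intro j
      have := hinv (j, 0) {OmegaB.infU j} (measurableSet_singleton _)
      rw [tau_preimage_infU] at this
      simp only [sub_self] at this
      exact this.symm
    have hR : ∀ k : ℤ, μ {OmegaB.infR k} = μ {OmegaB.infR 0} := by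
      intro k
      have := hinv (0, k) {OmegaB.infR k} (measurableSet_singleton _)
      rw [tau_preimage_infR] at this
      simp only [sub_self] at this
      exact this.symm
    have zero_of_orbit : ∀ c : ENNReal, (∃ g : ℤ → OmegaB, Function.Injective g ∧
        ∀ i, μ {g i} = c) → c = 0 := by
      rintro c ⟨g, hg, hgc⟩
      by_contra hne
      have htop : (⊤ : ENNReal) ≤ μ Set.univ := by
        calc (⊤ : ENNReal) = ∑' _ : ℤ, c := (ENNReal.tsum_const_eq_top_of_ne_zero hne).symm
          _ = ∑' i : ℤ, μ {g i} := tsum_congr fun i => (hgc i).symm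
          _ = μ (⋃ i : ℤ, {g i}) := (measure_iUnion
              (fun m n hmn => Set.disjoint_singleton.mpr fun h => hmn (hg h))
              (fun i => measurableSet_singleton _)).symm
          _ ≤ μ Set.univ := measure_mono (Set.subset_univ _)
      rw [measure_univ] at htop
      exact (by norm_num : ¬ (⊤ : ENNReal) ≤ 1) htop
    have hpt0 : μ {OmegaB.pt 0} = 0 :=
      zero_of_orbit _ ⟨fun i => OmegaB.pt (i, 0),
        fun a b h => by simpa [Prod.ext_iff] using h, fun i => hpt (i, 0)⟩
    have hU0 : μ {OmegaB.infU 0} = 0 :=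
      zero_of_orbit _ ⟨fun i => OmegaB.infU i, fun a b h => by simpa using h,
        fun i => hU i⟩
    have hR0 : μ {OmegaB.infR 0} = 0 :=
      zero_of_orbit _ ⟨fun i => OmegaB.infR i, fun a b h => by simpa using h,
        fun i => hR i⟩
    have hcompl : μ (({OmegaB.infAst, OmegaB.infCorner} : Set OmegaB)ᶜ) = 0 := by
      have hsub : (({OmegaB.infAst, OmegaB.infCorner} : Set OmegaB)ᶜ) ⊆
          (⋃ n : ℤ × ℤ, {OmegaB.pt n}) ∪
          (⋃ j : ℤ, {OmegaB.infU j}) ∪ (⋃ j : ℤ, {OmegaB.infR j}) := by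
        intro x hx
        cases x <;> simp at hx ⊢
      refine measure_mono_null hsub ?_
      exact measure_union_null (measure_union_null
        (measure_iUnion_null fun n => (hpt n).trans hpt0)
        (measure_iUnion_null fun j => (hU j).trans hU0))
        (measure_iUnion_null fun k => (hR k).trans hR0)
    have hm : MeasurableSet ({OmegaB.infAst, OmegaB.infCorner} : Set OmegaB) :=
      ((Set.finite_singleton _).insert _).measurableSet
    have hG : μ {OmegaB.infAst, OmegaB.infCorner} = 1 :=
      (prob_compl_eq_zero_iff hm).mp hcompl
    have hAstInv : ∀ γ : ℤ × ℤ, tauAct γ ⁻¹' ({OmegaB.infAst} : Set OmegaB) =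
        {OmegaB.infAst} := by
      intro γ
      ext x
      cases x <;> simp [tauAct]
    rcases h2 {OmegaB.infAst} (measurableSet_singleton _) hAstInv with h0 | h1'
    · left
      refine eq_dirac_of hp ?_
      refine le_antisymm prob_le_one ?_
      calc (1 : ENNReal) = μ {OmegaB.infAst, OmegaB.infCorner} := hG.symm
        _ = μ ({OmegaB.infAst} ∪ {OmegaB.infCorner}) := by rw [Set.insert_eq]
        _ ≤ μ {OmegaB.infAst} + μ {OmegaB.infCorner} := measure_union_le _ _
        _ = μ {OmegaB.infCorner} := by rw [h0, zero_add]
    · right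
      exact eq_dirac_of hp h1'
  · have hfix : ∀ (a : OmegaB), (∀ γ : ℤ × ℤ, tauAct γ a = a) →
        ((∀ γ : ℤ × ℤ, Measure.map (tauAct γ) (Measure.dirac a) = Measure.dirac a) ∧
        (∀ s : Set OmegaB, MeasurableSet s → (∀ γ : ℤ × ℤ, tauAct γ ⁻¹' s = s) →
          Measure.dirac a s = 0 ∨ Measure.dirac a s = 1)) := by
      intro a ha
      constructor
      · intro γ
        rw [Measure.map_dirac' (tau_measurable γ), ha γ]
      · intro s hs _
        rw [Measure.dirac_apply' a hs]
        by_cases h : a ∈ s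
        · right; simp [h]
        · left; simp [h]
    rintro (rfl | rfl)
    · exact hfix OmegaB.infCorner (fun γ => rfl)
    · exact hfix OmegaB.infAst (fun γ => rfl)
end
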